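/- The Galois group of the polynomial X⁷ − X³ − 1 over ℚ is the full symmetric group on its 7 roots; that is, the action of the Galois group of the splitting field of X⁷ − X³ − 1 over ℚ on the set of its roots induces an isomorphism of this Galois group with the symmetric group S₇ (equivalently, every permutation of the 7 roots is realized by a field automorphism of the splitting field fixing ℚ). -/

import Mathlib

open Polynomial

instance factSplitsSplittingField (p : Polynomial ℚ) :
    Fact ((p.map (algebraMap ℚ p.SplittingField)).Splits) :=
  ⟨SplittingField.splits p⟩


lemma zmod2_cases' : ∀ x : ZMod 2, x = 0 ∨ x = 1 := by decide
lemma zmod2_cases (x : ZMod 2) : x = 0 ∨ x = 1 := zmod2_cases' x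

lemma f2_irred : Irreducible (X^7 + X^3 + 1 : (ZMod 2)[X]) := by
  set f : (ZMod 2)[X] := X^7 + X^3 + 1 with hf
  have h2 : ((2 : (ZMod 2)[X])) = 0 := by
    exact_mod_cast CharP.cast_eq_zero ((ZMod 2)[X]) 2
  have hdeg : f.natDegree = 7 := by rw [hf]; compute_degree!
  have hmon : f.Monic := by rw [hf]; monicity!
  have hf0 : f ≠ 0 := hmon.ne_zero
  have hroot : ∀ x : ZMod 2, ¬ f.IsRoot x := by
    intro x hx
    rw [hf] at hx
    simp only [IsRoot, eval_add, eval_pow, eval_X, eval_one] at hx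
    revert hx
    rcases zmod2_cases x with rfl | rfl <;> decide
  have key : ∀ g : (ZMod 2)[X], Irreducible g → g ∣ f → 4 ≤ g.natDegree := by
    intro g hg hgf
    by_contra hup
    push_neg at hup
    have hg0 : g ≠ 0 := hg.ne_zero
    have hgmon : g.Monic := by
      have hlc : g.leadingCoeff ≠ 0 := leadingCoeff_ne_zero.mpr hg0
      rcases zmod2_cases g.leadingCoeff with h | h
      · exact absurd h hlc
      · exact h
    have hgpos : 0 < g.natDegree := hg.natDegree_pos
    have hgnoroot : ∀ x : ZMod 2, ¬ g.IsRoot x := fun x hx => hroot x (hx.dvd hgf)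
    have hrem : ∀ Q R : (ZMod 2)[X], R ≠ 0 → f = g * Q + R → g.natDegree ≤ R.natDegree := by
      intro Q R hR0 hid
      have : g ∣ f - g * Q := dvd_sub hgf (Dvd.intro _ rfl)
      rw [hid, add_sub_cancel_left] at this
      exact natDegree_le_of_dvd this hR0
    interval_cases hd : g.natDegree
    · -- degree 1
      rcases zmod2_cases (g.coeff 0) with h | h
      · apply hgnoroot 0
        rw [hgmon.eq_X_add_C hd, h]
        simp [IsRoot]
      · apply hgnoroot 1
        rw [hgmon.eq_X_add_C hd, h]
        simp [IsRoot]
        decide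
    · -- degree 2
      have hexp : g = X^2 + C (g.coeff 1) * X + C (g.coeff 0) := by
        have h3 : g.natDegree < 3 := by omega
        conv_lhs => rw [g.as_sum_range' 3 h3]
        rw [Finset.sum_range_succ, Finset.sum_range_succ, Finset.sum_range_succ,
          Finset.sum_range_zero]
        have hc2 : g.coeff 2 = 1 := by
          have := hgmon.coeff_natDegree; rwa [hd] at this
        simp only [hc2, ← C_mul_X_pow_eq_monomial]
        simp only [map_one]
        ring
      rcases zmod2_cases (g.coeff 1) with h1 | h1 <;> rcases zmod2_cases (g.coeff 0) with h0 | h0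
      · apply hgnoroot 0; rw [hexp, h1, h0]
        simp [IsRoot]; try decide
      · apply hgnoroot 1; rw [hexp, h1, h0]
        simp [IsRoot]; try decide
      · apply hgnoroot 0; rw [hexp, h1, h0]
        simp [IsRoot]; try decide
      · have hgeq : g = X^2 + X + 1 := by
          rw [hexp, h1, h0]; simp only [map_one]; ring
        have := hrem (X^5+X^4+X^2+1) X X_ne_zero (by
          rw [hgeq, hf]
          linear_combination (-X - X^2 - X^4 - X^5 - X^6 : (ZMod 2)[X]) * h2)
        rw [natDegree_X] at this; omega
    · -- degree 3
      have hexp : g = X^3 + C (g.coeff 2) * X^2 + C (g.coeff 1) * X + C (g.coeff 0) := by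
        have h4 : g.natDegree < 4 := by omega
        conv_lhs => rw [g.as_sum_range' 4 h4]
        rw [Finset.sum_range_succ, Finset.sum_range_succ, Finset.sum_range_succ,
          Finset.sum_range_succ, Finset.sum_range_zero]
        have hc3 : g.coeff 3 = 1 := by
          have := hgmon.coeff_natDegree; rwa [hd] at this
        simp only [hc3, ← C_mul_X_pow_eq_monomial]
        simp only [map_one]
        ring
      have hc0 : g.coeff 0 = 1 := by
        rcases zmod2_cases (g.coeff 0) with h0 | h0
        · exfalso; apply hgnoroot 0; rw [hexp, h0]
          simp [IsRoot]; try decide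
        · exact h0
      rcases zmod2_cases (g.coeff 2) with h2c | h2c <;> rcases zmod2_cases (g.coeff 1) with h1c | h1c
      · exfalso; apply hgnoroot 1; rw [hexp, h2c, h1c, hc0]
        simp [IsRoot]; try decide
      · have hgeq : g = X^3 + X + 1 := by
          rw [hexp, h2c, h1c, hc0]; simp only [map_one, map_zero]; ring
        have hne : (X + 1 : (ZMod 2)[X]).natDegree = 1 := by compute_degree!
        have hR0 : (X + 1 : (ZMod 2)[X]) ≠ 0 := fun hh => by
          have := congrArg (eval 0) hh; simp at this
        have := hrem (X^4+X^2+X) (X+1) hR0 (by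
          rw [hgeq, hf]
          linear_combination (-X - X^2 - X^4 - X^5 : (ZMod 2)[X]) * h2)
        rw [hne] at this; omega
      · have hgeq : g = X^3 + X^2 + 1 := by
          rw [hexp, h2c, h1c, hc0]; simp only [map_one, map_zero]; ring
        have hne : (X^2 + 1 : (ZMod 2)[X]).natDegree = 2 := by compute_degree!
        have hR0 : (X^2 + 1 : (ZMod 2)[X]) ≠ 0 := fun hh => by
          have := congrArg (eval 0) hh; simp at this
        have := hrem (X^4+X^3+X^2) (X^2+1) hR0 (by
          rw [hgeq, hf]
          linear_combination (-X^2 - X^4 - X^5 - X^6 : (ZMod 2)[X]) * h2)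
        rw [hne] at this; omega
      · exfalso; apply hgnoroot 1; rw [hexp, h2c, h1c, hc0]
        simp [IsRoot]; try decide
  constructor
  · intro hu
    rw [Polynomial.isUnit_iff_degree_eq_zero, degree_eq_natDegree hf0, hdeg] at hu
    exact absurd hu (by decide)
  · intro a b hab
    by_contra hcon
    push_neg at hcon
    obtain ⟨ha, hb⟩ := hcon
    have ha0 : a ≠ 0 := fun h => hf0 (by rw [hab, h, zero_mul])
    have hb0 : b ≠ 0 := fun h => hf0 (by rw [hab, h, mul_zero])
    have hdegs : a.natDegree + b.natDegree = 7 := by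
      rw [← natDegree_mul ha0 hb0, ← hab, hdeg]
    have hapos : 0 < a.natDegree := by
      rcases Nat.eq_zero_or_pos a.natDegree with h | h
      · exact absurd (isUnit_iff_degree_eq_zero.mpr
          (by rw [degree_eq_natDegree ha0, h]; rfl)) ha
      · exact h
    have hbpos : 0 < b.natDegree := by
      rcases Nat.eq_zero_or_pos b.natDegree with h | h
      · exact absurd (isUnit_iff_degree_eq_zero.mpr
          (by rw [degree_eq_natDegree hb0, h]; rfl)) hb
      · exact h
    rcases le_or_gt a.natDegree 3 with hle | hlt
    · obtain ⟨i, hi, hid⟩ := WfDvdMonoid.exists_irreducible_factor ha ha0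
      have h1 := key i hi (hid.trans ⟨b, hab⟩)
      have h2' := natDegree_le_of_dvd hid ha0
      omega
    · have hble : b.natDegree ≤ 3 := by omega
      obtain ⟨i, hi, hid⟩ := WfDvdMonoid.exists_irreducible_factor hb hb0
      have h1 := key i hi (hid.trans ⟨a, by rw [hab]; ring⟩)
      have h2' := natDegree_le_of_dvd hid hb0
      omega

lemma F_int_irred : Irreducible (X^7 - X^3 - 1 : ℤ[X]) := by
  have hmon : Monic (X^7 - X^3 - 1 : ℤ[X]) := by monicity!
  apply hmon.irreducible_of_irreducible_map (Int.castRingHom (ZMod 2))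
  have hmap : map (Int.castRingHom (ZMod 2)) (X^7 - X^3 - 1 : ℤ[X]) = X^7 + X^3 + 1 := by
    have h2 : ((2 : (ZMod 2)[X])) = 0 := by
      exact_mod_cast CharP.cast_eq_zero ((ZMod 2)[X]) 2
    rw [Polynomial.map_sub, Polynomial.map_sub, Polynomial.map_pow, Polynomial.map_pow,
      map_X, Polynomial.map_one]
    linear_combination (- X^3 - 1 : (ZMod 2)[X]) * h2
  rw [hmap]
  exact f2_irred

lemma F_irred : Irreducible (X^7 - X^3 - 1 : ℚ[X]) := by
  have hmon : Monic (X^7 - X^3 - 1 : ℤ[X]) := by monicity!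
  have h := (IsPrimitive.Int.irreducible_iff_irreducible_map_cast hmon.isPrimitive).mp F_int_irred
  have hmap : map (Int.castRingHom ℚ) (X^7 - X^3 - 1 : ℤ[X]) = X^7 - X^3 - 1 := by
    rw [Polynomial.map_sub, Polynomial.map_sub, Polynomial.map_pow, Polynomial.map_pow,
      map_X, Polynomial.map_one]
  rwa [hmap] at h


instance fact2557 : Fact (Nat.Prime 2557) := ⟨by norm_num⟩

lemma toZMod_eq_zero_iff_norm_lt_one (x : ℤ_[2557]) : PadicInt.toZMod x = 0 ↔ ‖x‖ < 1 := by
  rw [← RingHom.mem_ker, PadicInt.ker_toZMod, PadicInt.maximalIdeal_eq_span_p,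
    Ideal.mem_span_singleton, ← PadicInt.norm_lt_one_iff_dvd]

lemma hensel_root (c : ℤ) (h0 : ((c:ZMod 2557)^7 - c^3 - 1 = 0))
    (h1 : (7*(c:ZMod 2557)^6 - 3*(c:ZMod 2557)^2 ≠ 0)) :
    ∃ z : ℤ_[2557], Polynomial.eval z (X^7-X^3-1 : ℤ_[2557][X]) = 0 ∧
      PadicInt.toZMod z = (c : ZMod 2557) := by
  set a : ℤ_[2557] := (c : ℤ_[2557]) with ha
  have hza : PadicInt.toZMod a = (c : ZMod 2557) := by simp [ha]
  have heval : Polynomial.eval a (X^7-X^3-1 : ℤ_[2557][X]) = a^7 - a^3 - 1 := by simp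
  have hdeval : Polynomial.eval a (derivative (X^7-X^3-1 : ℤ_[2557][X])) = 7*a^6 - 3*a^2 := by
    simp [derivative_sub, derivative_X_pow, map_ofNat]; ring
  have hnorm1 : ‖Polynomial.eval a (X^7-X^3-1 : ℤ_[2557][X])‖ < 1 := by
    rw [heval, ← toZMod_eq_zero_iff_norm_lt_one]
    rw [map_sub, map_sub, map_pow, map_pow, map_one, hza]
    exact h0
  have hnorm2 : ‖Polynomial.eval a (derivative (X^7-X^3-1 : ℤ_[2557][X]))‖ = 1 := by
    refine le_antisymm (PadicInt.norm_le_one _) ?_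
    by_contra hlt
    push_neg at hlt
    rw [← toZMod_eq_zero_iff_norm_lt_one, hdeval, map_sub, map_mul, map_mul, map_pow, map_pow,
      map_ofNat, map_ofNat, hza] at hlt
    exact h1 hlt
  obtain ⟨z, hz0, hz1, -, -⟩ := hensels_lemma (F := (X^7-X^3-1 : ℤ_[2557][X])) (a := a)
    (by rw [coe_aeval_eq_eval, hnorm2]; simpa using hnorm1)
  refine ⟨z, by rwa [coe_aeval_eq_eval] at hz0, ?_⟩
  rw [coe_aeval_eq_eval, hnorm2] at hz1
  have : PadicInt.toZMod (z - a) = 0 := (toZMod_eq_zero_iff_norm_lt_one _).mpr hz1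
  rw [map_sub, sub_eq_zero] at this
  rw [this, hza]

noncomputable section PadicPart

def z1 : ℤ_[2557] := (hensel_root 429 (by decide) (by decide)).choose
def z2 : ℤ_[2557] := (hensel_root 698 (by decide) (by decide)).choose
def z3 : ℤ_[2557] := (hensel_root 709 (by decide) (by decide)).choose
def z4 : ℤ_[2557] := (hensel_root 786 (by decide) (by decide)).choose
def z5 : ℤ_[2557] := (hensel_root 1178 (by decide) (by decide)).choose

lemma z1_spec : Polynomial.eval z1 (X^7-X^3-1 : ℤ_[2557][X]) = 0 ∧
    PadicInt.toZMod z1 = ((429 : ℤ) : ZMod 2557) := (hensel_root 429 (by decide) (by decide)).choose_spec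
lemma z2_spec : Polynomial.eval z2 (X^7-X^3-1 : ℤ_[2557][X]) = 0 ∧
    PadicInt.toZMod z2 = ((698 : ℤ) : ZMod 2557) := (hensel_root 698 (by decide) (by decide)).choose_spec
lemma z3_spec : Polynomial.eval z3 (X^7-X^3-1 : ℤ_[2557][X]) = 0 ∧
    PadicInt.toZMod z3 = ((709 : ℤ) : ZMod 2557) := (hensel_root 709 (by decide) (by decide)).choose_spec
lemma z4_spec : Polynomial.eval z4 (X^7-X^3-1 : ℤ_[2557][X]) = 0 ∧
    PadicInt.toZMod z4 = ((786 : ℤ) : ZMod 2557) := (hensel_root 786 (by decide) (by decide)).choose_spec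
lemma z5_spec : Polynomial.eval z5 (X^7-X^3-1 : ℤ_[2557][X]) = 0 ∧
    PadicInt.toZMod z5 = ((1178 : ℤ) : ZMod 2557) := (hensel_root 1178 (by decide) (by decide)).choose_spec

def M : Multiset ℤ_[2557] := {z1, z2, z3, z4, z5}

lemma M_nodup : M.Nodup := by
  have key : ∀ x y : ℤ_[2557], PadicInt.toZMod x ≠ PadicInt.toZMod y → x ≠ y :=
    fun x y h hxy => h (by rw [hxy])
  have n12 : z1 ≠ z2 := key _ _ (by rw [z1_spec.2, z2_spec.2]; decide)
  have n13 : z1 ≠ z3 := key _ _ (by rw [z1_spec.2, z3_spec.2]; decide)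
  have n14 : z1 ≠ z4 := key _ _ (by rw [z1_spec.2, z4_spec.2]; decide)
  have n15 : z1 ≠ z5 := key _ _ (by rw [z1_spec.2, z5_spec.2]; decide)
  have n23 : z2 ≠ z3 := key _ _ (by rw [z2_spec.2, z3_spec.2]; decide)
  have n24 : z2 ≠ z4 := key _ _ (by rw [z2_spec.2, z4_spec.2]; decide)
  have n25 : z2 ≠ z5 := key _ _ (by rw [z2_spec.2, z5_spec.2]; decide)
  have n34 : z3 ≠ z4 := key _ _ (by rw [z3_spec.2, z4_spec.2]; decide)
  have n35 : z3 ≠ z5 := key _ _ (by rw [z3_spec.2, z5_spec.2]; decide)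
  have n45 : z4 ≠ z5 := key _ _ (by rw [z4_spec.2, z5_spec.2]; decide)
  simp only [M, Multiset.insert_eq_cons, Multiset.nodup_cons, Multiset.mem_cons,
    Multiset.mem_singleton, Multiset.nodup_singleton]
  refine ⟨?_, ?_, ?_, ?_, trivial⟩ <;> push_neg <;> tauto

def P5 : ℤ_[2557][X] := (M.map (fun a => X - C a)).prod

lemma P5_monic : P5.Monic :=
  monic_multiset_prod_of_monic _ _ (fun a _ => monic_X_sub_C a)

lemma P5_natDegree : P5.natDegree = 5 := by
  rw [P5, natDegree_multiset_prod_X_sub_C_eq_card]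
  rfl

lemma Fz_monic : Monic (X^7-X^3-1 : ℤ_[2557][X]) := by monicity!

lemma Fz_natDegree : natDegree (X^7-X^3-1 : ℤ_[2557][X]) = 7 := by compute_degree!

lemma M_roots : ∀ x ∈ M, Polynomial.eval x (X^7-X^3-1 : ℤ_[2557][X]) = 0 := by
  intro x hx
  simp only [M, Multiset.insert_eq_cons, Multiset.mem_cons, Multiset.mem_singleton] at hx
  rcases hx with rfl | rfl | rfl | rfl | rfl
  exacts [z1_spec.1, z2_spec.1, z3_spec.1, z4_spec.1, z5_spec.1]

lemma P5_dvd : P5 ∣ (X^7-X^3-1 : ℤ_[2557][X]) := by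
  classical
  have hle : M ≤ (X^7-X^3-1 : ℤ_[2557][X]).roots := by
    rw [Multiset.le_iff_count]
    intro a
    by_cases ha : a ∈ M
    · rw [Multiset.count_eq_one_of_mem M_nodup ha, count_roots]
      exact (rootMultiplicity_pos Fz_monic.ne_zero).mpr (M_roots a ha)
    · rw [Multiset.count_eq_zero_of_notMem ha]
      exact Nat.zero_le _
  calc P5 ∣ ((X^7-X^3-1 : ℤ_[2557][X]).roots.map (fun a => X - C a)).prod :=
        Multiset.prod_dvd_prod_of_le (Multiset.map_le_map hle)
    _ ∣ (X^7-X^3-1 : ℤ_[2557][X]) := prod_multiset_X_sub_C_dvd _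

def q : ℤ_[2557][X] := P5_dvd.choose

lemma Fz_eq : (X^7-X^3-1 : ℤ_[2557][X]) = P5 * q := P5_dvd.choose_spec

lemma q_monic : q.Monic := P5_monic.of_mul_monic_left (Fz_eq ▸ Fz_monic)

lemma q_natDegree : q.natDegree = 2 := by
  have h := Fz_natDegree
  rw [Fz_eq, natDegree_mul P5_monic.ne_zero q_monic.ne_zero, P5_natDegree] at h
  omega

lemma q_map_toZMod :
    q.map (PadicInt.toZMod (p := 2557)) = X^2 + 1243*X + 838 := by
  have hmapFz : (X^7-X^3-1 : ℤ_[2557][X]).map (PadicInt.toZMod (p := 2557)) =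
      (X^7-X^3-1 : (ZMod 2557)[X]) := by
    rw [Polynomial.map_sub, Polynomial.map_sub, Polynomial.map_pow, Polynomial.map_pow,
      map_X, Polynomial.map_one]
  have hmapP5 : P5.map (PadicInt.toZMod (p := 2557)) =
      (X - 429)*(X - 698)*(X - 709)*(X - 786)*(X - 1178) := by
    rw [P5, Polynomial.map_multiset_prod]
    simp only [M, Multiset.insert_eq_cons, Multiset.map_cons, Multiset.map_singleton,
      Polynomial.map_sub, map_X, map_C, Multiset.prod_cons, Multiset.prod_singleton,
      z1_spec.2, z2_spec.2, z3_spec.2, z4_spec.2, z5_spec.2]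
    push_cast [map_ofNat]
    ring
  have hfact : (X^7-X^3-1 : (ZMod 2557)[X]) =
      ((X - 429)*(X - 698)*(X - 709)*(X - 786)*(X - 1178)) * (X^2+1243*X+838) := by
    have h : ((2557 : (ZMod 2557)[X])) = 0 := by
      exact_mod_cast CharP.cast_eq_zero ((ZMod 2557)[X]) 2557
    linear_combination (64422871277723 + 95088047887728*X - 618910500392*X^2 + 1415663707*X^3
      - 1144145*X^4 - 355*X^5 + X^6 : (ZMod 2557)[X]) * h
  have hmul : (P5.map (PadicInt.toZMod (p := 2557))) * (q.map (PadicInt.toZMod (p := 2557))) =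
      (P5.map (PadicInt.toZMod (p := 2557))) * (X^2+1243*X+838) := by
    rw [← Polynomial.map_mul, ← Fz_eq, hmapFz, hfact, hmapP5]
  exact mul_left_cancel₀ (P5_monic.map _).ne_zero hmul

set_option maxRecDepth 100000 in
lemma gbar_irred : Irreducible (X^2 + 1243*X + 838 : (ZMod 2557)[X]) := by
  have hnonsq : ¬ IsSquare (2383 : ZMod 2557) := by
    rw [ZMod.euler_criterion 2557 (by decide : (2383:ZMod 2557) ≠ 0),
      show (2557/2 : ℕ) = 71*9*2 from rfl, pow_mul, pow_mul]
    decide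
  have hmon : Monic (X^2 + 1243*X + 838 : (ZMod 2557)[X]) := by monicity!
  have hdeg : natDegree (X^2 + 1243*X + 838 : (ZMod 2557)[X]) = 2 := by compute_degree!
  rw [hmon.irreducible_iff_roots_eq_zero_of_degree_le_three (by omega) (by omega)]
  by_contra hne
  obtain ⟨u, hu⟩ := Multiset.exists_mem_of_ne_zero hne
  rw [mem_roots hmon.ne_zero] at hu
  have hu' : u^2 + 1243*u + 838 = 0 := by
    have := hu
    simp only [IsRoot, eval_add, eval_mul, eval_pow, eval_X, eval_ofNat] at this
    convert this using 2
  apply hnonsq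
  refine ⟨2*u + 1243, ?_⟩
  have h0 : ((2557 : ZMod 2557)) = 0 := by decide
  linear_combination (-4 : ZMod 2557) * hu' + (-602 : ZMod 2557) * h0

lemma q_irred : Irreducible q := by
  apply q_monic.irreducible_of_irreducible_map (PadicInt.toZMod (p := 2557))
  rw [q_map_toZMod]
  exact gbar_irred

def qp : ℚ_[2557][X] := q.map (algebraMap ℤ_[2557] ℚ_[2557])

lemma qp_irred : Irreducible qp :=
  (q_monic.irreducible_iff_irreducible_map_fraction_map).mp q_irred

lemma qp_monic : qp.Monic := q_monic.map _

lemma qp_natDegree : qp.natDegree = 2 := by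
  rw [qp, natDegree_map_eq_of_injective (IsFractionRing.injective ℤ_[2557] ℚ_[2557]) q]
  exact q_natDegree

def K : Type := qp.SplittingField

instance : Field K := Polynomial.SplittingField.instField qp

instance : Algebra ℚ_[2557] K := inferInstanceAs (Algebra ℚ_[2557] qp.SplittingField)

instance : CharZero K :=
  charZero_of_injective_algebraMap (algebraMap ℚ_[2557] K).injective

instance : Algebra ℚ K := inferInstance

instance : Normal ℚ_[2557] K := Polynomial.SplittingField.instNormal qp

instance : IsScalarTower ℚ ℚ_[2557] K :=
  IsScalarTower.of_algebraMap_eq fun x => by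
    have : (algebraMap ℚ K) = (algebraMap ℚ_[2557] K).comp (algebraMap ℚ ℚ_[2557]) :=
      RingHom.ext_rat _ _
    rw [this]; rfl

lemma qp_splits : (qp.map (algebraMap ℚ_[2557] K)).Splits := SplittingField.splits qp

def qpK : K[X] := qp.map (algebraMap ℚ_[2557] K)

lemma qpK_roots_card : Multiset.card qpK.roots = 2 := by
  rw [qpK, ← qp_splits.natDegree_eq_card_roots, natDegree_map, qp_natDegree]

lemma qp_sep : qp.Separable := qp_irred.separable

lemma qpK_roots_nodup : qpK.roots.Nodup := nodup_roots (qp_sep.map)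

lemma splits_multiset_X_sub_C {K₀ L₀ : Type*} [Field K₀] [Field L₀] (i : K₀ →+* L₀)
    (M0 : Multiset K₀) : ((M0.map (fun a => X - C a)).prod.map i).Splits := by
  refine (Splits.multisetProd (fun f hf => ?_)).map i
  obtain ⟨a, -, rfl⟩ := Multiset.mem_map.mp hf
  exact Splits.X_sub_C a

def ψK : ℤ_[2557] →+* K := (algebraMap ℚ_[2557] K).comp (algebraMap ℤ_[2557] ℚ_[2557])

def P5K : K[X] := (M.map (fun a => (X : K[X]) - C (ψK a))).prod

lemma mapψK_P5 : P5.map ψK = P5K := by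
  rw [P5, P5K, Polynomial.map_multiset_prod, Multiset.map_map]
  congr 1
  exact Multiset.map_congr rfl (fun a _ => by
    simp only [Function.comp_apply, Polynomial.map_sub, map_X, map_C])

lemma mapψK_q : q.map ψK = qpK := by
  rw [qpK, qp, ψK, ← Polynomial.map_map]

lemma FK_eval (y : K) : y^7 - y^3 - 1 = (eval y P5K) * (eval y qpK) := by
  have h1 : (X^7-X^3-1 : ℤ_[2557][X]).map ψK = P5K * qpK := by
    rw [Fz_eq, Polynomial.map_mul, mapψK_P5, mapψK_q]
  have h2 := congrArg (eval y) h1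
  rw [eval_mul] at h2
  rw [← h2]
  simp [Polynomial.map_sub]

lemma FK_splits : ((X^7 - X^3 - 1 : ℚ[X]).map (algebraMap ℚ K)).Splits := by
  have hQp : (X^7-X^3-1 : ℚ[X]).map (algebraMap ℚ ℚ_[2557]) =
      (X^7-X^3-1 : ℤ_[2557][X]).map (algebraMap ℤ_[2557] ℚ_[2557]) := by
    simp only [Polynomial.map_sub, Polynomial.map_pow, map_X, Polynomial.map_one]
  have hsplit : (((X^7-X^3-1 : ℚ[X]).map (algebraMap ℚ ℚ_[2557])).map (algebraMap ℚ_[2557] K)).Splits := by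
    rw [hQp, Fz_eq, Polynomial.map_mul, Polynomial.map_mul]
    apply Splits.mul
    · have : P5.map (algebraMap ℤ_[2557] ℚ_[2557]) =
          ((M.map (algebraMap ℤ_[2557] ℚ_[2557])).map (fun a => X - C a)).prod := by
        rw [P5, Polynomial.map_multiset_prod, Multiset.map_map, Multiset.map_map]
        congr 1
        exact Multiset.map_congr rfl (fun a _ => by
          simp only [Function.comp_apply, Polynomial.map_sub, map_X, map_C])
      rw [this]
      exact splits_multiset_X_sub_C _ _
    · exact qp_splits
  rw [Polynomial.map_map] at hsplit
  have : (algebraMap ℚ_[2557] K).comp (algebraMap ℚ ℚ_[2557]) = algebraMap ℚ K :=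
    RingHom.ext_rat _ _
  rwa [this] at hsplit

lemma exists_betas : ∃ b1 b2 : K, b1 ≠ b2 ∧ qpK.roots = {b1, b2} := by
  obtain ⟨x, y, hxy⟩ := Multiset.card_eq_two.mp qpK_roots_card
  refine ⟨x, y, ?_, hxy⟩
  have hnd := qpK_roots_nodup
  rw [hxy] at hnd
  intro h
  subst h
  simp [Multiset.insert_eq_cons] at hnd

lemma FQ_monic : Monic (X^7 - X^3 - 1 : ℚ[X]) := by monicity!


/-- The Galois group of `X⁷ − X³ − 1` over `ℚ` is the full symmetric
group on its 7 roots: the action of the Galois group of its splitting field on the set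
of roots induces an isomorphism with `S₇`, i.e. the action homomorphism to the
permutation group of the roots is bijective and there are exactly 7 roots. -/
theorem gal_X_pow_seven_sub_X_pow_three_sub_one_eq_symmetric :
    Function.Bijective
      (Polynomial.Gal.galActionHom (X ^ 7 - X ^ 3 - 1 : Polynomial ℚ)
        (X ^ 7 - X ^ 3 - 1 : Polynomial ℚ).SplittingField) ∧
    Nat.card
      ((X ^ 7 - X ^ 3 - 1 : Polynomial ℚ).rootSet
        (X ^ 7 - X ^ 3 - 1 : Polynomial ℚ).SplittingField) = 7 := by
  classical
  have hFdeg : (X ^ 7 - X ^ 3 - 1 : ℚ[X]).natDegree = 7 := by compute_degree!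
  have hFsep : (X ^ 7 - X ^ 3 - 1 : ℚ[X]).Separable := F_irred.separable
  have hF0 : (X ^ 7 - X ^ 3 - 1 : ℚ[X]) ≠ 0 := FQ_monic.ne_zero
  haveI hfac : Fact (((X ^ 7 - X ^ 3 - 1 : ℚ[X]).map (algebraMap ℚ K)).Splits) := ⟨FK_splits⟩
  have hcardK : Fintype.card ((X ^ 7 - X ^ 3 - 1 : ℚ[X]).rootSet K) = 7 := by
    rw [card_rootSet_eq_natDegree hFsep FK_splits, hFdeg]
  obtain ⟨b1, b2, hbne, hroots⟩ := exists_betas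
  have qpK0 : qpK ≠ 0 := (qp_monic.map _).ne_zero
  have hb1root : eval b1 qpK = 0 := by
    have : b1 ∈ qpK.roots := by rw [hroots]; simp
    exact (mem_roots qpK0).mp this
  have hb2root : eval b2 qpK = 0 := by
    have : b2 ∈ qpK.roots := by rw [hroots]; simp
    exact (mem_roots qpK0).mp this
  have haevalF : ∀ y : K, aeval y (X ^ 7 - X ^ 3 - 1 : ℚ[X]) = y^7 - y^3 - 1 := by
    intro y; simp
  have hb1mem : b1 ∈ (X ^ 7 - X ^ 3 - 1 : ℚ[X]).rootSet K := by
    rw [mem_rootSet]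
    exact ⟨hF0, by rw [haevalF, FK_eval, hb1root, mul_zero]⟩
  have hb2mem : b2 ∈ (X ^ 7 - X ^ 3 - 1 : ℚ[X]).rootSet K := by
    rw [mem_rootSet]
    exact ⟨hF0, by rw [haevalF, FK_eval, hb2root, mul_zero]⟩
  -- minimal polynomials and the automorphism
  have haeval_qp : ∀ y : K, aeval y qp = eval y qpK := by
    intro y; rw [qpK, aeval_def, eval_map]
  have hmin1 : minpoly ℚ_[2557] b1 = qp :=
    (minpoly.eq_of_irreducible_of_monic qp_irred (by rw [haeval_qp]; exact hb1root)
      qp_monic).symm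
  have hmin2 : minpoly ℚ_[2557] b2 = qp :=
    (minpoly.eq_of_irreducible_of_monic qp_irred (by rw [haeval_qp]; exact hb2root)
      qp_monic).symm
  have horb : b1 ∈ MulAction.orbit (K ≃ₐ[ℚ_[2557]] K) b2 :=
    (Normal.minpoly_eq_iff_mem_orbit K).mp (hmin1.trans hmin2.symm)
  obtain ⟨σ, hσ⟩ := horb
  have hσb2 : σ b2 = b1 := hσ
  have hσroot : σ b1 ∈ qpK.roots := by
    rw [mem_roots qpK0]
    have : aeval (σ b1) qp = σ (aeval b1 qp) := aeval_algHom_apply σ b1 qp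
    rw [haeval_qp, haeval_qp, hb1root, map_zero] at this
    exact this
  have hσb1 : σ b1 = b2 := by
    have hmem : σ b1 ∈ ({b1, b2} : Multiset K) := by rw [← hroots]; exact hσroot
    simp only [Multiset.insert_eq_cons, Multiset.mem_cons, Multiset.mem_singleton] at hmem
    rcases hmem with h | h
    · exact absurd (σ.injective (hσb2.trans h.symm)) hbne.symm
    · exact h
  -- root classification
  have hclass : ∀ y : K, y ∈ (X ^ 7 - X ^ 3 - 1 : ℚ[X]).rootSet K →
      y = b1 ∨ y = b2 ∨ σ y = y := by
    intro y hy
    rw [mem_rootSet] at hy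
    have h0 : y^7 - y^3 - 1 = 0 := by rw [← haevalF y]; exact hy.2
    rw [FK_eval] at h0
    rcases mul_eq_zero.mp h0 with h | h
    · right; right
      rw [P5K, eval_multiset_prod, Multiset.map_map] at h
      obtain ⟨w, hwmem, hw0⟩ := Multiset.mem_map.mp (Multiset.prod_eq_zero_iff.mp h)
      simp only [Function.comp_apply, eval_sub, eval_X, eval_C] at hw0
      rw [sub_eq_zero] at hw0
      rw [hw0]
      exact σ.commutes _
    · have : y ∈ qpK.roots := (mem_roots qpK0).mpr h
      rw [hroots] at this
      simp only [Multiset.insert_eq_cons, Multiset.mem_cons, Multiset.mem_singleton] at this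
      tauto
  -- the swap
  set σ'' : K ≃ₐ[ℚ] K := AlgEquiv.restrictScalars ℚ σ with hσ''
  have hσ''apply : ∀ y : K, σ'' y = σ y := fun y => rfl
  set τ := Polynomial.Gal.galActionHom (X ^ 7 - X ^ 3 - 1 : ℚ[X]) K
    (Polynomial.Gal.restrict (X ^ 7 - X ^ 3 - 1 : ℚ[X]) K σ'') with hτdef
  have hτ : ∀ x : (X ^ 7 - X ^ 3 - 1 : ℚ[X]).rootSet K, (τ x : K) = σ (x : K) := fun x =>
    Polynomial.Gal.galActionHom_restrict (X ^ 7 - X ^ 3 - 1 : ℚ[X]) K σ'' x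
  set x1 : (X ^ 7 - X ^ 3 - 1 : ℚ[X]).rootSet K := ⟨b1, hb1mem⟩ with hx1
  set x2 : (X ^ 7 - X ^ 3 - 1 : ℚ[X]).rootSet K := ⟨b2, hb2mem⟩ with hx2
  have hx12 : x1 ≠ x2 := fun h => hbne (congrArg Subtype.val h)
  have hτswap : τ = Equiv.swap x1 x2 := by
    apply Equiv.ext
    intro x
    by_cases h1 : x = x1
    · subst h1
      rw [Equiv.swap_apply_left]
      exact Subtype.ext (by rw [hτ x1]; exact hσb1)
    · by_cases h2 : x = x2
      · subst h2
        rw [Equiv.swap_apply_right]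
        exact Subtype.ext (by rw [hτ x2]; exact hσb2)
      · rw [Equiv.swap_apply_of_ne_of_ne h1 h2]
        refine Subtype.ext ?_
        rw [hτ x]
        rcases hclass (x : K) x.2 with h | h | h
        · exact absurd (Subtype.ext h) h1
        · exact absurd (Subtype.ext h) h2
        · exact h
  -- group theory
  have hbijK : Function.Bijective
      (Polynomial.Gal.galActionHom (X ^ 7 - X ^ 3 - 1 : ℚ[X]) K) := by
    refine ⟨Polynomial.Gal.galActionHom_injective _ K, ?_⟩
    rw [← MonoidHom.range_eq_top]
    apply Equiv.Perm.subgroup_eq_top_of_swap_mem (τ := τ)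
    · rw [hcardK]; norm_num
    · rw [hcardK]
      have hdvd := Polynomial.Gal.prime_degree_dvd_card F_irred
        (by rw [hFdeg]; norm_num)
      rw [hFdeg] at hdvd
      simpa only [Fintype.card_eq_nat_card,
        Nat.card_congr (MonoidHom.ofInjective
          (Polynomial.Gal.galActionHom_injective (X ^ 7 - X ^ 3 - 1 : ℚ[X]) K)).toEquiv.symm]
        using hdvd
    · exact ⟨_, rfl⟩
    · rw [hτswap]
      exact ⟨x1, x2, hx12, rfl⟩
  have hcardL : Fintype.card
      ((X ^ 7 - X ^ 3 - 1 : ℚ[X]).rootSet (X ^ 7 - X ^ 3 - 1 : ℚ[X]).SplittingField) = 7 := by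
    convert (card_rootSet_eq_natDegree hFsep (SplittingField.splits _)).trans hFdeg
    · rfl
    · rfl
    · exact Subsingleton.elim _ _
  constructor
  · rw [Fintype.bijective_iff_injective_and_card]
    refine ⟨Polynomial.Gal.galActionHom_injective _ _, ?_⟩
    rw [Fintype.card_of_bijective hbijK, Fintype.card_perm, Fintype.card_perm, hcardK, hcardL]
  · rw [Nat.card_eq_fintype_card, hcardL]

end PadicPart
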